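/- Let p be a prime and M a module over S = ℤ[t]/(t^p − 1) with im(1 − t^M) = M. Then N(t^M) = 0 and ker(1 − t^M) is a vector space over ℤ/p. -/

import Mathlib

/-- The norm endomorphism `N(t) = 1 + t + ⋯ + t^{p-1}` of a module over `ℤ[t]/(t^p - 1)`,
encoded as an abelian group `M` with an endomorphism `t` satisfying `t^p = 1`. -/
def normEnd (p : ℕ) {M : Type*} [AddCommGroup M] (t : AddMonoid.End M) : AddMonoid.End M :=
  ∑ j ∈ Finset.range p, t ^ j

/-- For a prime `p` and a module `M` over `S = ℤ[t]/(t^p − 1)` with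
`im(1 − t^M) = M`, one has `N(t^M) = 0`, and `ker(1 − t^M)` is a `ℤ/p`-vector space
(i.e. it is annihilated by `p`). -/
theorem stmt9 (p : ℕ) (hp : p.Prime) {M : Type*} [AddCommGroup M] (t : AddMonoid.End M)
    (ht : t ^ p = 1) (hsurj : AddMonoidHom.range ((1 : AddMonoid.End M) - t) = ⊤) :
    normEnd p t = 0 ∧
    ∀ x ∈ AddMonoidHom.ker ((1 : AddMonoid.End M) - t), p • x = 0 := by
  have hmul : normEnd p t * ((1 : AddMonoid.End M) - t) = 0 := by
    have h : normEnd p t * (t - 1) = 0 := by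
      rw [normEnd, geom_sum_mul, ht, sub_self]
    rw [← neg_sub t 1, mul_neg, h, neg_zero]
  have hN : normEnd p t = 0 := by
    apply AddMonoidHom.ext
    intro m
    have hm : m ∈ AddMonoidHom.range ((1 : AddMonoid.End M) - t) := by
      rw [hsurj]; trivial
    obtain ⟨y, hy⟩ := hm
    have : normEnd p t m = (normEnd p t * ((1 : AddMonoid.End M) - t)) y := by
      rw [← hy]; rfl
    refine this.trans ?_
    rw [hmul]; rfl
  refine ⟨hN, fun x hx => ?_⟩
  have htx : t x = x := by
    have : x - t x = 0 := hx
    have := sub_eq_zero.mp this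
    exact this.symm
  have hpow : ∀ j, (t ^ j) x = x := by
    intro j
    induction j with
    | zero => rfl
    | succ n ih =>
      rw [pow_succ]
      show (t ^ n) (t x) = x
      rw [htx, ih]
  have : normEnd p t x = p • x := by
    erw [normEnd, AddMonoidHom.finset_sum_apply]
    exact (Finset.sum_congr rfl (fun j _ => hpow j)).trans (by simp)
  rw [← this, hN]; rfl
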